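/- Suppose the graph G is bicycle-free at radius r. Then any two distinct cycles in G of length at most 2r are vertex-disjoint. -/

import Mathlib

open scoped Classical

namespace NearRamanujan

variable {V : Type*} [Fintype V] [DecidableEq V]

/-- The set of vertices within distance `r` of `v` in `G`. -/
noncomputable def ball (G : SimpleGraph V) (v : V) (r : ℕ) : Finset V :=
  Finset.univ.filter (fun u => ∃ p : G.Walk v u, p.length ≤ r)

/-- The number of edges of the subgraph of `G` induced on the vertex set `S`. -/
noncomputable def edgesWithin (G : SimpleGraph V) (S : Finset V) : ℕ :=
  (G.edgeFinset.filter (fun e => ∀ x ∈ e, x ∈ S)).card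

/-- `G` is bicycle-free at radius `r`: the subgraph induced on each radius-`r` ball
(which is a connected graph) contains at most one cycle, equivalently it has at most
as many edges as vertices. -/
def BicycleFree (G : SimpleGraph V) (r : ℕ) : Prop :=
  ∀ v : V, edgesWithin G (ball G v r) ≤ (ball G v r).card

/-- The value in `{±1}` of an edge-signing `σ : G.edgeSet → Bool` on `e` (`0` off the edges). -/
noncomputable def edgeSign (G : SimpleGraph V) (σ : G.edgeSet → Bool) (e : Sym2 V) : ℝ :=
  if h : e ∈ G.edgeSet then (if σ ⟨e, h⟩ then 1 else -1) else 0

/-- The signed adjacency matrix of the edge-signing `σ` of `G`. -/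
noncomputable def signedAdj (G : SimpleGraph V) (σ : G.edgeSet → Bool) : Matrix V V ℝ :=
  fun u v => if G.Adj u v then edgeSign G σ s(u, v) else 0

/-- The signed non-backtracking matrix of the edge-signing `σ` of `G`, indexed by
the darts (directed edges) of `G`. -/
noncomputable def nbMatrix (G : SimpleGraph V) (σ : G.edgeSet → Bool) :
    Matrix G.Dart G.Dart ℝ :=
  fun e f => if e.snd = f.fst ∧ f.snd ≠ e.fst then edgeSign G σ s(f.fst, f.snd) else 0


section Aux

set_option linter.unusedSectionVars false

open SimpleGraph Walk

variable {W : Type*} [Fintype W] [DecidableEq W]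

private lemma aux_connected_sdiff (G : SimpleGraph W) (hconn : G.Connected)
    (e : Sym2 W) (hbr : ¬ G.IsBridge e) :
    (G \ SimpleGraph.fromEdgeSet {e}).Connected := by
  haveI := hconn.nonempty
  refine SimpleGraph.Connected.mk fun a b => ?_
  obtain ⟨p⟩ := hconn.preconnected a b
  induction p with
  | nil => exact Reachable.refl _
  | @cons a c b h q ih =>
    refine Reachable.trans ?_ ih
    by_cases hce : s(a, c) = e
    · subst hce
      rw [SimpleGraph.isBridge_iff] at hbr
      push_neg at hbr
      exact hbr
    · refine SimpleGraph.Adj.reachable ?_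
      rw [SimpleGraph.sdiff_adj]
      refine ⟨h, ?_⟩
      rw [SimpleGraph.fromEdgeSet_adj]
      rintro ⟨hm, -⟩
      exact hce (by simpa using hm)

private lemma aux_edgeSet_sdiff (G : SimpleGraph W) (e : Sym2 W) :
    (G \ SimpleGraph.fromEdgeSet {e}).edgeSet = G.edgeSet \ {e} := by
  rw [SimpleGraph.edgeSet_sdiff, SimpleGraph.edgeSet_fromEdgeSet,
    SimpleGraph.edgeSet_sdiff_sdiff_isDiag]

private lemma aux_ncard_lt (G : SimpleGraph W) {e : Sym2 W} (he : e ∈ G.edgeSet) :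
    (G \ SimpleGraph.fromEdgeSet {e}).edgeSet.ncard < G.edgeSet.ncard := by
  rw [aux_edgeSet_sdiff G e]
  exact Set.ncard_diff_singleton_lt_of_mem he (Set.toFinite _)

private lemma aux_card_le (n : ℕ) : ∀ (G : SimpleGraph W), G.edgeSet.ncard = n → G.Connected →
    Fintype.card W ≤ n + 1 := by
  induction n using Nat.strong_induction_on with
  | _ n ih =>
    intro G hn hconn
    by_cases hac : G.IsAcyclic
    · have ht : G.IsTree := ⟨hconn, hac⟩
      have h1 := ht.card_edgeFinset
      have h2 : G.edgeSet.ncard = G.edgeFinset.card := Set.ncard_eq_toFinset_card' _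
      omega
    · simp only [SimpleGraph.IsAcyclic] at hac
      push_neg at hac
      obtain ⟨w, c, hc⟩ := hac
      have h3 := hc.three_le_length
      obtain ⟨e, hec⟩ : ∃ e, e ∈ c.edges :=
        List.exists_mem_of_length_pos (by rw [c.length_edges]; omega)
      have he : e ∈ G.edgeSet := c.edges_subset_edgeSet hec
      have hbr : ¬ G.IsBridge e := by
        rw [SimpleGraph.isBridge_iff_forall_cycle_notMem he]
        intro hall
        exact hall c hc hec
      have hconn' := aux_connected_sdiff G hconn e hbr
      have hlt : (G \ SimpleGraph.fromEdgeSet {e}).edgeSet.ncard < n := by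
        rw [← hn]; exact aux_ncard_lt G he
      have := ih _ hlt _ rfl hconn'
      omega

private lemma aux_no_two_cycles (G : SimpleGraph W) (hconn : G.Connected)
    (hcard : G.edgeSet.ncard ≤ Fintype.card W)
    {u v : W} (c₁ : G.Walk u u) (c₂ : G.Walk v v)
    (h₁ : c₁.IsCycle) (h₂ : c₂.IsCycle)
    {e : Sym2 W} (he₁ : e ∈ c₁.edges) (he₂ : e ∉ c₂.edges) : False := by
  set G₁ := G \ SimpleGraph.fromEdgeSet {e} with hG₁
  have hbr : ¬ G.IsBridge e := by
    rw [SimpleGraph.isBridge_iff_forall_cycle_notMem (c₁.edges_subset_edgeSet he₁)]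
    intro hall
    exact hall c₁ h₁ he₁
  have hconn₁ : G₁.Connected := aux_connected_sdiff G hconn e hbr
  have hlt₁ : G₁.edgeSet.ncard < G.edgeSet.ncard :=
    aux_ncard_lt G (c₁.edges_subset_edgeSet he₁)
  have htr : ∀ f ∈ c₂.edges, f ∈ G₁.edgeSet := by
    intro f hf
    rw [hG₁, aux_edgeSet_sdiff G e]
    exact ⟨c₂.edges_subset_edgeSet hf, fun hfe => he₂ (hfe ▸ hf)⟩
  have h₂' : (c₂.transfer G₁ htr).IsCycle := h₂.transfer htr
  have h3 := h₂.three_le_length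
  obtain ⟨f, hf⟩ : ∃ f, f ∈ c₂.edges :=
    List.exists_mem_of_length_pos (by rw [c₂.length_edges]; omega)
  have hf' : f ∈ (c₂.transfer G₁ htr).edges := by rwa [Walk.edges_transfer]
  have hbr₂ : ¬ G₁.IsBridge f := by
    rw [SimpleGraph.isBridge_iff_forall_cycle_notMem ((c₂.transfer G₁ htr).edges_subset_edgeSet hf')]
    intro hall
    exact hall _ h₂' hf'
  have hconn₂ := aux_connected_sdiff G₁ hconn₁ f hbr₂
  have hlt₂ : (G₁ \ SimpleGraph.fromEdgeSet {f}).edgeSet.ncard < G₁.edgeSet.ncard :=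
    aux_ncard_lt G₁ ((c₂.transfer G₁ htr).edges_subset_edgeSet hf')
  have hfin := aux_card_le _ _ rfl hconn₂
  omega

private lemma aux_no_two_cycles' (G : SimpleGraph W) (hconn : G.Connected)
    (hcard : G.edgeSet.ncard ≤ Fintype.card W)
    {u v : W} (c₁ : G.Walk u u) (c₂ : G.Walk v v)
    (h₁ : c₁.IsCycle) (h₂ : c₂.IsCycle)
    (hne : c₁.edges.toFinset ≠ c₂.edges.toFinset) : False := by
  by_cases hsub : c₁.edges.toFinset ⊆ c₂.edges.toFinset
  · have h' : ¬ c₂.edges.toFinset ⊆ c₁.edges.toFinset := fun h' =>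
      hne (subset_antisymm hsub h')
    obtain ⟨e, he2, he1⟩ := Finset.not_subset.1 h'
    exact aux_no_two_cycles G hconn hcard c₂ c₁ h₂ h₁ (List.mem_toFinset.1 he2)
      (fun hh => he1 (List.mem_toFinset.2 hh))
  · obtain ⟨e, he1, he2⟩ := Finset.not_subset.1 hsub
    exact aux_no_two_cycles G hconn hcard c₁ c₂ h₁ h₂ (List.mem_toFinset.1 he1)
      (fun hh => he2 (List.mem_toFinset.2 hh))

private lemma aux_short_walk {G : SimpleGraph W} {u x y : W} (c : G.Walk u u)
    (hx : x ∈ c.support) (hy : y ∈ c.support) {r : ℕ} (hl : c.length ≤ 2 * r) :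
    ∃ p : G.Walk x y, p.length ≤ r := by
  have hspec := c.take_spec hx
  set t := c.takeUntil x hx with ht
  set d := c.dropUntil x hx with hd
  have hlen : t.length + d.length = c.length := by
    rw [← hspec, Walk.length_append]
  by_cases hyd : y ∈ d.support
  · have hspec2 := d.take_spec hyd
    set p₁ := d.takeUntil y hyd with hp₁
    set p₂ := d.dropUntil y hyd with hp₂
    have hlen2 : p₁.length + p₂.length = d.length := by
      rw [← hspec2, Walk.length_append]
    by_cases hcase : p₁.length ≤ r
    · exact ⟨p₁, hcase⟩
    · exact ⟨(p₂.append t).reverse, by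
        rw [Walk.length_reverse, Walk.length_append]; omega⟩
  · have hyt : y ∈ t.support := by
      have h' := hy
      rw [← hspec, Walk.mem_support_append_iff] at h'
      exact h'.resolve_right hyd
    have hspec2 := t.take_spec hyt
    set q₁ := t.takeUntil y hyt with hq₁
    set q₂ := t.dropUntil y hyt with hq₂
    have hlen2 : q₁.length + q₂.length = t.length := by
      rw [← hspec2, Walk.length_append]
    by_cases hcase : q₂.length ≤ r
    · exact ⟨q₂.reverse, by rw [Walk.length_reverse]; omega⟩
    · exact ⟨d.append q₁, by rw [Walk.length_append]; omega⟩

/-- Lift a walk whose support lies in `s` to the induced graph on `s`. -/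
private def induceWalk (G : SimpleGraph W) (s : Set W) :
    ∀ {a b : W} (p : G.Walk a b), (∀ y ∈ p.support, y ∈ s) →
      ∀ (ha : a ∈ s) (hb : b ∈ s), (G.induce s).Walk ⟨a, ha⟩ ⟨b, hb⟩
  | _, _, Walk.nil, _, _, _ => Walk.nil
  | a, b, Walk.cons h q, hp, ha, hb =>
    Walk.cons (by exact h)
      (induceWalk G s q
        (fun y hy => hp y (by rw [Walk.support_cons]; exact List.mem_cons_of_mem _ hy))
        (hp _ (by rw [Walk.support_cons]; exact List.mem_cons_of_mem _ q.start_mem_support)) hb)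

private lemma induceWalk_map (G : SimpleGraph W) (s : Set W) :
    ∀ {a b : W} (p : G.Walk a b) (hp : ∀ y ∈ p.support, y ∈ s) (ha : a ∈ s) (hb : b ∈ s),
      (induceWalk G s p hp ha hb).map (SimpleGraph.Embedding.induce s).toHom = p
  | _, _, Walk.nil, _, _, _ => rfl
  | a, b, Walk.cons h q, hp, ha, hb => by
    change Walk.cons _ (Walk.map _ (induceWalk G s q _ _ hb)) = _
    congr 1
    exact induceWalk_map G s q _ _ _

private lemma mem_ball_iff {G : SimpleGraph W} {x y : W} {r : ℕ} :
    y ∈ ball G x r ↔ ∃ p : G.Walk x y, p.length ≤ r := by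
  simp [ball]

private lemma aux_ball_connected (G : SimpleGraph W) (x : W) (r : ℕ) :
    (G.induce ((ball G x r : Finset W) : Set W)).Connected := by
  have hx : x ∈ ((ball G x r : Finset W) : Set W) :=
    Finset.mem_coe.2 (mem_ball_iff.2 ⟨Walk.nil, by simp⟩)
  have key : ∀ (n : ℕ) (a : W) (ha : a ∈ ((ball G x r : Finset W) : Set W))
      (p : G.Walk a x), p.length ≤ r → p.length ≤ n →
      (G.induce ((ball G x r : Finset W) : Set W)).Reachable ⟨a, ha⟩ ⟨x, hx⟩ := by
    intro n
    induction n with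
    | zero =>
      intro a ha p hpr hpn
      cases p with
      | nil => exact SimpleGraph.Reachable.refl _
      | cons hadj q => simp [Walk.length_cons] at hpn
    | succ n ihn =>
      intro a ha p hpr hpn
      cases p with
      | nil => exact SimpleGraph.Reachable.refl _
      | @cons _ w _ hadj q =>
        rw [Walk.length_cons] at hpr hpn
        have hw : w ∈ ((ball G x r : Finset W) : Set W) := by
          refine Finset.mem_coe.2 (mem_ball_iff.2 ⟨q.reverse, ?_⟩)
          rw [Walk.length_reverse]; omega
        have hadj' : (G.induce ((ball G x r : Finset W) : Set W)).Adj ⟨a, ha⟩ ⟨w, hw⟩ := by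
          exact hadj
        exact hadj'.reachable.trans (ihn w hw q (by omega) (by omega))
  have hreach : ∀ b : ((ball G x r : Finset W) : Set W),
      (G.induce ((ball G x r : Finset W) : Set W)).Reachable b ⟨x, hx⟩ := by
    rintro ⟨b, hb⟩
    obtain ⟨p, hp⟩ := mem_ball_iff.1 (Finset.mem_coe.1 hb)
    exact key p.length b hb p.reverse (by rw [Walk.length_reverse]; exact hp)
      (by rw [Walk.length_reverse])
  haveI : Nonempty ((ball G x r : Finset W) : Set W) := ⟨⟨x, hx⟩⟩
  exact SimpleGraph.Connected.mk fun a b => (hreach a).trans (hreach b).symm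

private lemma aux_edgesWithin_eq (G : SimpleGraph W) (S : Finset W) :
    (G.induce (S : Set W)).edgeFinset.card = edgesWithin G S := by
  simp only [edgesWithin]
  refine Finset.card_bij (fun e _ => Sym2.map Subtype.val e) ?_ ?_ ?_
  · intro e he
    induction e using Sym2.ind with
    | _ a b =>
      rw [SimpleGraph.mem_edgeFinset] at he
      have hadj : G.Adj a.1 b.1 := (SimpleGraph.mem_edgeSet _).1 he
      rw [Sym2.map_pair_eq, Finset.mem_filter]
      refine ⟨SimpleGraph.mem_edgeFinset.2 ((SimpleGraph.mem_edgeSet _).2 hadj), ?_⟩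
      intro z hz
      rw [Sym2.mem_iff] at hz
      rcases hz with rfl | rfl
      · exact Finset.mem_coe.1 a.2
      · exact Finset.mem_coe.1 b.2
  · intro e1 _ e2 _ heq
    exact Sym2.map.injective Subtype.val_injective heq
  · intro e he
    induction e using Sym2.ind with
    | _ a b =>
      rw [Finset.mem_filter] at he
      have hadj : G.Adj a b := (SimpleGraph.mem_edgeSet _).1 (SimpleGraph.mem_edgeFinset.1 he.1)
      have ha : a ∈ (S : Set W) := Finset.mem_coe.2 (he.2 a (Sym2.mem_mk_left a b))
      have hb : b ∈ (S : Set W) := Finset.mem_coe.2 (he.2 b (Sym2.mem_mk_right a b))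
      refine ⟨s(⟨a, ha⟩, ⟨b, hb⟩),
        SimpleGraph.mem_edgeFinset.2 ((SimpleGraph.mem_edgeSet _).2 (by exact hadj)), ?_⟩
      rw [Sym2.map_pair_eq]

end Aux

/-- Fact 2.15.  If `G` is bicycle-free at radius `r`, then any two
distinct cycles in `G` of length at most `2r` are vertex-disjoint.  Two cycles are
distinct when their edge sets differ (a cycle is determined, up to rotation and
reflection, by its edge set). -/
theorem cycles_vertexDisjoint_of_bicycleFree {V : Type*} [Fintype V] [DecidableEq V]
    (G : SimpleGraph V) (r : ℕ) (h : BicycleFree G r)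
    (u v : V) (c₁ : G.Walk u u) (c₂ : G.Walk v v)
    (h₁ : c₁.IsCycle) (h₂ : c₂.IsCycle)
    (hl₁ : c₁.length ≤ 2 * r) (hl₂ : c₂.length ≤ 2 * r)
    (hne : c₁.edges.toFinset ≠ c₂.edges.toFinset) :
    ∀ x : V, x ∈ c₁.support → x ∉ c₂.support := by
  intro x hx₁ hx₂
  set S := ball G x r with hS
  have hsup₁ : ∀ y ∈ c₁.support, y ∈ (S : Set V) := by
    intro y hy
    obtain ⟨p, hp⟩ := aux_short_walk c₁ hx₁ hy hl₁
    exact Finset.mem_coe.2 (mem_ball_iff.2 ⟨p, hp⟩)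
  have hsup₂ : ∀ y ∈ c₂.support, y ∈ (S : Set V) := by
    intro y hy
    obtain ⟨p, hp⟩ := aux_short_walk c₂ hx₂ hy hl₂
    exact Finset.mem_coe.2 (mem_ball_iff.2 ⟨p, hp⟩)
  set q₁ := induceWalk G (S : Set V) c₁ hsup₁ (hsup₁ u c₁.start_mem_support)
    (hsup₁ u c₁.end_mem_support) with hq₁def
  set q₂ := induceWalk G (S : Set V) c₂ hsup₂ (hsup₂ v c₂.start_mem_support)
    (hsup₂ v c₂.end_mem_support) with hq₂def
  have hmap₁ := induceWalk_map G (S : Set V) c₁ hsup₁ (hsup₁ u c₁.start_mem_support)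
    (hsup₁ u c₁.end_mem_support)
  have hmap₂ := induceWalk_map G (S : Set V) c₂ hsup₂ (hsup₂ v c₂.start_mem_support)
    (hsup₂ v c₂.end_mem_support)
  have hcyc₁ : q₁.IsCycle := by
    have h₁' := h₁
    rw [← hmap₁] at h₁'
    exact (SimpleGraph.Walk.map_isCycle_iff_of_injective
      (by exact Subtype.val_injective)).1 h₁'
  have hcyc₂ : q₂.IsCycle := by
    have h₂' := h₂
    rw [← hmap₂] at h₂'
    exact (SimpleGraph.Walk.map_isCycle_iff_of_injective
      (by exact Subtype.val_injective)).1 h₂' 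
  have hedges₁ : q₁.edges.map (Sym2.map Subtype.val) = c₁.edges := by
    conv_rhs => rw [← hmap₁]
    erw [SimpleGraph.Walk.edges_map]
    rfl
  have hedges₂ : q₂.edges.map (Sym2.map Subtype.val) = c₂.edges := by
    conv_rhs => rw [← hmap₂]
    erw [SimpleGraph.Walk.edges_map]
    rfl
  have hne' : q₁.edges.toFinset ≠ q₂.edges.toFinset := by
    intro hEq
    apply hne
    have hmem : ∀ f, f ∈ q₁.edges ↔ f ∈ q₂.edges := fun f => by
      rw [← List.mem_toFinset, hEq, List.mem_toFinset]
    ext e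
    simp only [List.mem_toFinset, ← hedges₁, ← hedges₂, List.mem_map]
    constructor
    · rintro ⟨f, hf, rfl⟩; exact ⟨f, (hmem f).1 hf, rfl⟩
    · rintro ⟨f, hf, rfl⟩; exact ⟨f, (hmem f).2 hf, rfl⟩
  have hconn := aux_ball_connected G x r
  have hcard : (G.induce (S : Set V)).edgeSet.ncard ≤ Fintype.card ((S : Set V)) := by
    have h1 : (G.induce (S : Set V)).edgeSet.ncard = (G.induce (S : Set V)).edgeFinset.card :=
      Set.ncard_eq_toFinset_card' _
    have h2 : Fintype.card ((S : Set V)) = S.card := by simp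
    rw [h1, aux_edgesWithin_eq, h2]
    exact h x
  exact aux_no_two_cycles' _ hconn hcard q₁ q₂ hcyc₁ hcyc₂ hne'

end NearRamanujan
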